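/- If X, Y ∈ S^n satisfy −3α[[I,0],[0,I]] ≤ [[X,0],[0,−Y]] ≤ 3α[[I,−I],[−I,I]] for some α > 0, then X ≤ Y (as symmetric matrices) and moreover ‖X‖ ≤ 3α and ‖Y‖ ≤ 3α in operator norm. -/

import Mathlib

open Matrix

lemma aux_sq_psd {m : Type*} [Fintype m] [DecidableEq m]
    {A : Matrix m m ℝ} (hA : A.IsHermitian) {c : ℝ}
    (hev : ∀ i, (hA.eigenvalues i)^2 ≤ c^2) :
    (c^2 • (1 : Matrix m m ℝ) - A * A).PosSemidef := by
  have hspec := hA.spectral_theorem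
  rw [Unitary.conjStarAlgAut_apply] at hspec
  set U : Matrix m m ℝ := (hA.eigenvectorUnitary : Matrix m m ℝ) with hU
  have hUU : U * star U = 1 := (Matrix.mem_unitaryGroup_iff).mp hA.eigenvectorUnitary.2
  have hUU' : star U * U = 1 := (Matrix.mem_unitaryGroup_iff').mp hA.eigenvectorUnitary.2
  have hsm : c^2 • (1 : Matrix m m ℝ) = diagonal (fun _ => c^2) := by
    rw [smul_one_eq_diagonal]
  have key : c^2 • (1 : Matrix m m ℝ) - A * A
      = U * diagonal (fun i => c^2 - (hA.eigenvalues i)^2) * Uᴴ := by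
    have hdiag : diagonal (fun i => c^2 - (hA.eigenvalues i)^2)
        = c^2 • (1 : Matrix m m ℝ)
          - diagonal (RCLike.ofReal ∘ hA.eigenvalues) * diagonal (RCLike.ofReal ∘ hA.eigenvalues) := by
      rw [diagonal_mul_diagonal, hsm, diagonal_sub]
      funext i
      simp [sq]
    have hA2 : A * A = U * (diagonal (RCLike.ofReal ∘ hA.eigenvalues)
        * diagonal (RCLike.ofReal ∘ hA.eigenvalues)) * star U := by
      conv_lhs => rw [hspec]
      simp only [Matrix.mul_assoc]
      rw [← Matrix.mul_assoc (star U) U, hUU', Matrix.one_mul]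
    rw [hdiag, Matrix.mul_sub, Matrix.sub_mul, hA2]
    congr 1
    rw [hsm]
    have : U * diagonal (fun _ => c^2) = diagonal (fun _ => c^2) * U := by
      ext i j; simp [diagonal, mul_apply, Finset.sum_ite_eq, Finset.sum_ite_eq', mul_comm]
    rw [this, Matrix.mul_assoc, show Uᴴ = star U from rfl, hUU, Matrix.mul_one]
  rw [key]
  exact (Matrix.PosSemidef.diagonal (fun i => by simpa using hev i)).mul_mul_conjTranspose_same U

lemma aux_norm_le {m : Type*} [Fintype m] [DecidableEq m]
    {A : Matrix m m ℝ} (hA : A.IsHermitian) {c : ℝ} (hc : 0 ≤ c)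
    (h1 : (c • (1 : Matrix m m ℝ) - A).PosSemidef)
    (h2 : (c • (1 : Matrix m m ℝ) + A).PosSemidef) :
    ‖toEuclideanCLM (𝕜 := ℝ) A‖ ≤ c := by
  have hsymm : Aᵀ = A := hA
  have hev : ∀ i, (hA.eigenvalues i)^2 ≤ c^2 := by
    intro i
    set v : m → ℝ := ⇑(hA.eigenvectorBasis i) with hvdef
    have hv : A *ᵥ v = hA.eigenvalues i • v := hA.mulVec_eigenvectorBasis i
    have hvv : v ⬝ᵥ v = 1 := by
      have hn : ‖hA.eigenvectorBasis i‖ = 1 := hA.eigenvectorBasis.orthonormal.1 i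
      have : (inner ℝ (hA.eigenvectorBasis i) (hA.eigenvectorBasis i) : ℝ) = 1 := by
        rw [real_inner_self_eq_norm_sq, hn]; norm_num
      simpa only [PiLp.inner_apply, RCLike.inner_apply, conj_trivial, dotProduct, mul_comm] using this
    have b1 := h1.dotProduct_mulVec_nonneg v
    have b2 := h2.dotProduct_mulVec_nonneg v
    simp only [sub_mulVec, add_mulVec, smul_mulVec, one_mulVec, dotProduct_sub,
      dotProduct_add, dotProduct_smul, star_trivial, hv, hvv, smul_eq_mul, mul_one] at b1 b2
    nlinarith [b1, b2]
  have hsq := aux_sq_psd hA hev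
  refine ContinuousLinearMap.opNorm_le_bound _ hc (fun x => ?_)
  set w : m → ℝ := (WithLp.equiv 2 (m → ℝ)) x with hwdef
  have hax : toEuclideanCLM (𝕜 := ℝ) A x = (WithLp.equiv 2 (m → ℝ)).symm (A *ᵥ w) := by
    apply (WithLp.equiv 2 (m → ℝ)).injective
    simp [ofLp_toEuclideanCLM, toLin'_apply, hwdef]
  have hnormsq : ∀ y : EuclideanSpace ℝ m, ‖y‖^2 = (WithLp.equiv 2 (m → ℝ) y) ⬝ᵥ (WithLp.equiv 2 (m → ℝ) y) := by
    intro y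
    rw [← real_inner_self_eq_norm_sq]
    simp only [PiLp.inner_apply, RCLike.inner_apply, conj_trivial, dotProduct, WithLp.equiv_apply, mul_comm]
  have h1' : ‖toEuclideanCLM (𝕜 := ℝ) A x‖^2 = (A *ᵥ w) ⬝ᵥ (A *ᵥ w) := by
    rw [hax, hnormsq]; simp
  have h2' : (A *ᵥ w) ⬝ᵥ (A *ᵥ w) = w ⬝ᵥ ((A * A) *ᵥ w) := by
    rw [← mulVec_mulVec, dotProduct_mulVec, ← mulVec_transpose, hsymm, dotProduct_comm]
  have hb := hsq.dotProduct_mulVec_nonneg w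
  simp only [sub_mulVec, smul_mulVec, one_mulVec, dotProduct_sub,
    dotProduct_smul, star_trivial, smul_eq_mul] at hb
  have hx2 : ‖x‖^2 = w ⬝ᵥ w := hnormsq x
  have key : ‖toEuclideanCLM (𝕜 := ℝ) A x‖^2 ≤ (c * ‖x‖)^2 := by
    rw [h1', h2', mul_pow, hx2]
    nlinarith [hb]
  exact (pow_le_pow_iff_left₀ (norm_nonneg _) (by positivity) two_ne_zero).mp key

/-- If `−3α[[I,0],[0,I]] ≤ [[X,0],[0,−Y]] ≤ 3α[[I,−I],[−I,I]]` with `α > 0`,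
then `X ≤ Y` and `‖X‖, ‖Y‖ ≤ 3α` in operator (spectral) norm. -/
theorem block_inequalities_imply_order_and_opNorm_bounds {n : ℕ} (α : ℝ) (hα : 0 < α)
    (X Y : Matrix (Fin n) (Fin n) ℝ) (hX : X.IsSymm) (hY : Y.IsSymm)
    (h₁ : (Matrix.fromBlocks X 0 0 (-Y)
        - (-(3 * α)) • (1 : Matrix (Fin n ⊕ Fin n) (Fin n ⊕ Fin n) ℝ)).PosSemidef)
    (h₂ : (Matrix.fromBlocks ((3 * α) • (1 : Matrix (Fin n) (Fin n) ℝ))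
            ((3 * α) • (-1 : Matrix (Fin n) (Fin n) ℝ))
            ((3 * α) • (-1 : Matrix (Fin n) (Fin n) ℝ))
            ((3 * α) • (1 : Matrix (Fin n) (Fin n) ℝ))
          - Matrix.fromBlocks X 0 0 (-Y)).PosSemidef) :
    (Y - X).PosSemidef ∧
      ‖Matrix.toEuclideanCLM (𝕜 := ℝ) X‖ ≤ 3 * α ∧
      ‖Matrix.toEuclideanCLM (𝕜 := ℝ) Y‖ ≤ 3 * α := by
  have hXh : X.IsHermitian := by
    rw [Matrix.IsHermitian, conjTranspose]; simpa [Matrix.IsSymm, Matrix.map, conj_trivial, Matrix.transpose] using hX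
  have hYh : Y.IsHermitian := by
    rw [Matrix.IsHermitian, conjTranspose]; simpa [Matrix.IsSymm, Matrix.map, conj_trivial, Matrix.transpose] using hY
  set s : ℝ := 3 * α with hs
  have hsnn : (0:ℝ) ≤ s := by positivity
  -- quadratic form evaluations
  have q1 : ∀ v w : Fin n → ℝ,
      0 ≤ (v ⬝ᵥ (X *ᵥ v) + s * (v ⬝ᵥ v)) + (- (w ⬝ᵥ (Y *ᵥ w)) + s * (w ⬝ᵥ w)) := by
    intro v w
    have hsmul : ∀ (t : ℝ) (a b : Fin n → ℝ), t • (a ⊕ᵥ b) = (t • a) ⊕ᵥ (t • b) := by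
      intro t a b; funext i; cases i <;> simp
    have := h₁.dotProduct_mulVec_nonneg (Sum.elim v w)
    simp only [sub_mulVec, add_mulVec, fromBlocks_mulVec, Sum.elim_comp_inl, Sum.elim_comp_inr,
      neg_mulVec, smul_mulVec, one_mulVec, mulVec_zero, zero_mulVec, add_zero, zero_add,
      neg_smul, neg_neg, sub_neg_eq_add, hsmul, sumElim_dotProduct_sumElim, dotProduct_sub,
      dotProduct_smul, dotProduct_add, dotProduct_neg, smul_eq_mul, star_trivial] at this
    linarith [this]
  have q2 : ∀ v w : Fin n → ℝ,
      0 ≤ (s * (v ⬝ᵥ v) - s * (v ⬝ᵥ w) - s * (w ⬝ᵥ v) + s * (w ⬝ᵥ w))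
          - v ⬝ᵥ (X *ᵥ v) + w ⬝ᵥ (Y *ᵥ w) := by
    intro v w
    have := h₂.dotProduct_mulVec_nonneg (Sum.elim v w)
    have hsmul : ∀ (t : ℝ) (a b : Fin n → ℝ), t • (a ⊕ᵥ b) = (t • a) ⊕ᵥ (t • b) := by
      intro t a b; funext i; cases i <;> simp
    simp only [sub_mulVec, add_mulVec, hsmul, fromBlocks_mulVec, Sum.elim_comp_inl, Sum.elim_comp_inr,
      smul_mulVec, one_mulVec, neg_mulVec, mulVec_zero, zero_mulVec, add_zero, zero_add,
      sumElim_dotProduct_sumElim, dotProduct_sub, dotProduct_add, dotProduct_smul,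
      dotProduct_neg, smul_eq_mul, star_trivial] at this
    linarith [this]
  have hermYX : (Y - X).IsHermitian := hYh.sub hXh
  have psdYX : (Y - X).PosSemidef := by
    refine .of_dotProduct_mulVec_nonneg hermYX (fun v => ?_)
    have := q2 v v
    simp only [star_trivial, sub_mulVec, dotProduct_sub]
    linarith [this]
  have hP1 : (s • (1 : Matrix (Fin n) (Fin n) ℝ) + X).PosSemidef := by
    refine .of_dotProduct_mulVec_nonneg (by simp [Matrix.IsHermitian, hXh.eq, Matrix.IsSymm.eq hX]) (fun v => ?_)
    have := q1 v 0
    simp only [star_trivial, add_mulVec, smul_mulVec, one_mulVec, dotProduct_add,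
      dotProduct_smul, smul_eq_mul]
    simp only [dotProduct_zero, zero_dotProduct, mulVec_zero, mul_zero, neg_zero, add_zero] at this
    linarith [this]
  have hP2 : (s • (1 : Matrix (Fin n) (Fin n) ℝ) - Y).PosSemidef := by
    refine .of_dotProduct_mulVec_nonneg (by simp [Matrix.IsHermitian, hYh.eq, Matrix.IsSymm.eq hY]) (fun v => ?_)
    have := q1 0 v
    simp only [star_trivial, sub_mulVec, smul_mulVec, one_mulVec, dotProduct_sub,
      dotProduct_smul, smul_eq_mul]
    simp only [dotProduct_zero, zero_dotProduct, mulVec_zero, mul_zero, neg_zero, zero_add] at this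
    linarith [this]
  have hP3 : (s • (1 : Matrix (Fin n) (Fin n) ℝ) - X).PosSemidef := by
    refine .of_dotProduct_mulVec_nonneg (by simp [Matrix.IsHermitian, hXh.eq, Matrix.IsSymm.eq hX]) (fun v => ?_)
    have := q2 v 0
    simp only [star_trivial, sub_mulVec, smul_mulVec, one_mulVec, dotProduct_sub,
      dotProduct_smul, smul_eq_mul]
    simp only [dotProduct_zero, zero_dotProduct, mulVec_zero, mul_zero, neg_zero, add_zero,
      sub_zero, zero_add] at this
    linarith [this]
  have hP4 : (s • (1 : Matrix (Fin n) (Fin n) ℝ) + Y).PosSemidef := by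
    refine .of_dotProduct_mulVec_nonneg (by simp [Matrix.IsHermitian, hYh.eq, Matrix.IsSymm.eq hY]) (fun v => ?_)
    have := q2 0 v
    simp only [star_trivial, add_mulVec, smul_mulVec, one_mulVec, dotProduct_add,
      dotProduct_smul, smul_eq_mul]
    simp only [dotProduct_zero, zero_dotProduct, mulVec_zero, mul_zero, neg_zero, add_zero,
      sub_zero, zero_sub, zero_add] at this
    linarith [this]
  exact ⟨psdYX, aux_norm_le hXh hsnn hP3 hP1, aux_norm_le hYh hsnn hP2 hP4⟩
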